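/- arXiv:1904.08097 — 11 statements merged into one kernel-verified Lean document; each statement's English description precedes it below -/
import Mathlib

section
/- Let A be a real m×n matrix with n ≤ m and let e be the standard basis of ℝ^m (i.e., of Fin m → ℝ). In the n-th exterior power ⋀[ℝ]^n (Fin m → ℝ), the wedge product of the columns of A expands as: ιMulti applied to the family of columns (j ↦ A·eⱼ) equals Σ_f det(A.submatrix f id) • ιMulti (e ∘ f), where the sum runs over all strictly monotone maps f : Fin n → Fin m. -/
open Matrix

private lemma aux_bij {m n : ℕ} :
    Function.Bijective (fun p : (Fin n ↪o Fin m) × Equiv.Perm (Fin n) =>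
      (⟨p.1 ∘ p.2, p.1.injective.comp p.2.injective⟩ :
        {f : Fin n → Fin m // Function.Injective f})) := by
  classical
  constructor
  · rintro ⟨f₀, σ⟩ ⟨f₁, τ⟩ h
    simp only [Subtype.mk.injEq] at h
    have himg : Finset.univ.image (f₀ : Fin n → Fin m) = Finset.univ.image (f₁ : Fin n → Fin m) := by
      have h0 : Finset.univ.image ((f₀ : Fin n → Fin m) ∘ σ) = Finset.univ.image (f₀ : Fin n → Fin m) := by
        rw [← Finset.image_image, Finset.image_univ_of_surjective σ.surjective]
      have h1 : Finset.univ.image ((f₁ : Fin n → Fin m) ∘ τ) = Finset.univ.image (f₁ : Fin n → Fin m) := by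
        rw [← Finset.image_image, Finset.image_univ_of_surjective τ.surjective]
      rw [← h0, ← h1, h]
    set s := Finset.univ.image (f₀ : Fin n → Fin m) with hs
    have hcard : s.card = n := by
      rw [hs, Finset.card_image_of_injective _ f₀.injective, Finset.card_univ, Fintype.card_fin]
    have hf₀ : f₀ = s.orderEmbOfFin hcard :=
      Finset.orderEmbOfFin_unique' hcard (fun x => Finset.mem_image_of_mem _ (Finset.mem_univ x))
    have hf₁ : f₁ = s.orderEmbOfFin hcard := by
      refine Finset.orderEmbOfFin_unique' hcard (fun x => ?_)
      rw [himg]; exact Finset.mem_image_of_mem _ (Finset.mem_univ x)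
    have hff : f₀ = f₁ := hf₀.trans hf₁.symm
    subst hff
    have : σ = τ := by
      ext j
      exact Fin.val_eq_of_eq (f₀.injective (congrFun h j))
    rw [this]
  · rintro ⟨f, hf⟩
    set s := Finset.univ.image f with hs
    have hcard : s.card = n := by
      rw [hs, Finset.card_image_of_injective _ hf, Finset.card_univ, Fintype.card_fin]
    have hmemb : ∀ j, f j ∈ s := fun j => Finset.mem_image_of_mem _ (Finset.mem_univ j)
    have hbij : Function.Bijective (fun j : Fin n => (⟨f j, hmemb j⟩ : s)) := by
      rw [Fintype.bijective_iff_injective_and_card]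
      constructor
      · intro a b hab
        exact hf (congrArg Subtype.val hab)
      · simp [Fintype.card_coe, hcard]
    refine ⟨⟨s.orderEmbOfFin hcard,
      ((Equiv.ofBijective _ hbij).trans (s.orderIsoOfFin hcard).symm.toEquiv)⟩, ?_⟩
    ext j
    simp only [Function.comp_apply, Equiv.trans_apply, Equiv.ofBijective_apply]
    have := Finset.coe_orderIsoOfFin_apply s hcard
      ((s.orderIsoOfFin hcard).symm.toEquiv ⟨f j, hmemb j⟩)
    rw [← this]
    simp

/-- In the exterior algebra of `ℝ^m`, the wedge product of the columns of a tall `m × n`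
real matrix `A` expands as the sum, over strictly monotone maps `f : Fin n → Fin m`, of
`det (A.submatrix f id)` times the wedge of the standard basis vectors `e_{f 1}, …, e_{f n}`. -/
theorem iMulti_cols_eq_sum_det_submatrix_smul {m n : ℕ} (hn : n ≤ m)
    (A : Matrix (Fin m) (Fin n) ℝ) :
    ExteriorAlgebra.ιMulti ℝ n (M := Fin m → ℝ) (fun j i => A i j) =
      ∑ f : Fin n ↪o Fin m, (A.submatrix f id).det •
        ExteriorAlgebra.ιMulti ℝ n (M := Fin m → ℝ)
          (fun j => Pi.single (f j) (1 : ℝ)) := by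
  classical
  set g := ExteriorAlgebra.ιMulti ℝ n (M := Fin m → ℝ) with hg
  set e : Fin m → (Fin m → ℝ) := fun i => Pi.single i (1 : ℝ) with he
  have hv : (fun j i => A i j) = fun j => ∑ i, A i j • e i := by
    funext j i
    simp [he, Finset.sum_apply, Pi.single_apply]
  rw [hv]
  have h1 : g (fun j => ∑ i, A i j • e i)
      = ∑ f : Fin n → Fin m, (∏ j, A (f j) j) • g (e ∘ f) := by
    rw [show g (fun j => ∑ i, A i j • e i)
        = g.toMultilinearMap (fun j => ∑ i : Fin m, A i j • e i) from rfl,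
      MultilinearMap.map_sum]
    refine Finset.sum_congr rfl fun f _ => ?_
    exact g.toMultilinearMap.map_smul_univ (fun j => A (f j) j) (fun j => e (f j))
  rw [h1]
  have h2 : ∑ f : Fin n → Fin m, (∏ j, A (f j) j) • g (e ∘ f)
      = ∑ f : {f : Fin n → Fin m // Function.Injective f},
          (∏ j, A (f.1 j) j) • g (e ∘ f.1) := by
    rw [← Finset.sum_subtype (Finset.univ.filter (fun f : Fin n → Fin m => Function.Injective f))
      (fun f => by simp) (fun f => (∏ j, A (f j) j) • g (e ∘ f))]
    refine (Finset.sum_filter_of_ne fun f _ hne => ?_).symm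
    by_contra hinj
    apply hne
    rw [g.map_eq_zero_of_not_injective (e ∘ f)
      (fun h => hinj (Function.Injective.of_comp h)), smul_zero]
  rw [h2]
  have h3 : ∑ f : {f : Fin n → Fin m // Function.Injective f},
        (∏ j, A (f.1 j) j) • g (e ∘ f.1)
      = ∑ p : (Fin n ↪o Fin m) × Equiv.Perm (Fin n),
        (∏ j, A (p.1 (p.2 j)) j) • g (e ∘ p.1 ∘ p.2) :=
    (Fintype.sum_bijective _ (aux_bij (m := m) (n := n))
      (fun p => (∏ j, A (p.1 (p.2 j)) j) • g (e ∘ p.1 ∘ p.2))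
      (fun f => (∏ j, A (f.1 j) j) • g (e ∘ f.1)) (fun p => rfl)).symm
  rw [h3, Fintype.sum_prod_type]
  refine Finset.sum_congr rfl fun f₀ _ => ?_
  have hsingle : (fun j => Pi.single (f₀ j) (1 : ℝ)) = e ∘ f₀ := rfl
  rw [hsingle]
  calc ∑ σ : Equiv.Perm (Fin n), (∏ j, A (f₀ (σ j)) j) • g (e ∘ f₀ ∘ σ)
      = ∑ σ : Equiv.Perm (Fin n),
          (Equiv.Perm.sign σ • ∏ j, A (f₀ (σ j)) j) • g (e ∘ f₀) := by
        refine Finset.sum_congr rfl fun σ _ => ?_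
        have : g (e ∘ f₀ ∘ σ) = Equiv.Perm.sign σ • g (e ∘ f₀) := g.map_perm (e ∘ f₀) σ
        rw [this, Units.smul_def, Units.smul_def, ← Int.cast_smul_eq_zsmul ℝ,
          ← Int.cast_smul_eq_zsmul ℝ, smul_smul, smul_eq_mul, mul_comm]
    _ = (A.submatrix f₀ id).det • g (e ∘ f₀) := by
        rw [Matrix.det_apply, Finset.sum_smul]
        refine Finset.sum_congr rfl fun σ _ => ?_
        simp [Matrix.submatrix_apply]
end

section
/- For any two real m×n matrices A and B with n ≤ m, the determinant of the n×n product AᵀB equals the dot product of their vector determinants: det(AᵀB) = Σ_f det(A.submatrix f id) · det(B.submatrix f id), where the sum runs over all strictly monotone maps f : Fin n → Fin m. -/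
open Matrix Finset

private def ordOf {m n : ℕ} {g : Fin n → Fin m} (hg : Function.Injective g) :
    Fin n ↪o Fin m :=
  OrderEmbedding.ofStrictMono (g ∘ Tuple.sort g)
    ((Tuple.monotone_sort g).strictMono_of_injective (hg.comp (Tuple.sort g).injective))

private lemma coe_ordOf {m n : ℕ} {g : Fin n → Fin m} (hg : Function.Injective g) :
    ⇑(ordOf hg) = g ∘ ⇑(Tuple.sort g) := rfl

private lemma sort_comp {m n : ℕ} (f : Fin n ↪o Fin m) (σ : Equiv.Perm (Fin n)) :
    Tuple.sort (⇑f ∘ ⇑σ) = σ⁻¹ := by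
  set g : Fin n → Fin m := ⇑f ∘ ⇑σ with hg
  have hginj : Function.Injective g := f.injective.comp σ.injective
  have h1 : Monotone (g ∘ ⇑σ⁻¹) := by
    have : g ∘ ⇑σ⁻¹ = ⇑f := by ext i; simp [hg]
    rw [this]; exact f.monotone
  have h := Tuple.unique_monotone (Tuple.monotone_sort g) h1
  exact Equiv.ext fun i => hginj (congrFun h i)

private lemma ordOf_comp {m n : ℕ} (f : Fin n ↪o Fin m) (σ : Equiv.Perm (Fin n))
    (h : Function.Injective (⇑f ∘ ⇑σ)) : ordOf h = f := by
  refine DFunLike.coe_injective ?_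
  show ⇑(ordOf h) = ⇑f
  rw [coe_ordOf, sort_comp]
  ext i; simp

private lemma sum_inj {m n : ℕ} (T : (Fin n → Fin m) → ℝ) :
    ∑ g ∈ univ.filter (fun g : Fin n → Fin m => Function.Injective g), T g
      = ∑ p : (Fin n ↪o Fin m) × Equiv.Perm (Fin n), T (⇑p.1 ∘ ⇑p.2) := by
  refine Finset.sum_bij'
    (fun g hg => (ordOf (mem_filter.mp hg).2, (Tuple.sort g)⁻¹))
    (fun p _ => ⇑p.1 ∘ ⇑p.2) (fun _ _ => mem_univ _)
    (fun p _ => mem_filter.mpr ⟨mem_univ _, p.1.injective.comp p.2.injective⟩)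
    ?_ ?_ ?_
  · intro g hg
    simp only [coe_ordOf]
    ext i; simp
  · intro p hp
    refine Prod.ext (ordOf_comp p.1 p.2 (p.1.injective.comp p.2.injective)) ?_
    simp only [sort_comp]; simp
  · intro g hg
    simp only [coe_ordOf]
    congr 1
    ext i; simp

private lemma det_sub_eq {m n : ℕ} (A : Matrix (Fin m) (Fin n) ℝ) (g : Fin n → Fin m) :
    (A.submatrix g id).det = ∑ σ : Equiv.Perm (Fin n),
      Equiv.Perm.sign σ * ∏ i, A (g i) (σ i) := by
  rw [← Matrix.det_transpose, det_apply']
  simp [Matrix.submatrix, Matrix.transpose_apply]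

private lemma det_sub_zero {m n : ℕ} (A : Matrix (Fin m) (Fin n) ℝ) {g : Fin n → Fin m}
    (hg : ¬ Function.Injective g) : (A.submatrix g id).det = 0 := by
  simp only [Function.Injective, not_forall] at hg
  obtain ⟨i, j, hij, hne⟩ := hg
  exact Matrix.det_zero_of_row_eq hne (by ext k; simp [hij])

/-- Cauchy–Binet: for two real `m × n` matrices `A` and `B` with `n ≤ m`, the determinant of
`Aᵀ * B` is the dot product of their vector determinants, i.e. the sum over strictly
monotone maps `f : Fin n → Fin m` of the products of the corresponding maximal square
subdeterminants. -/
theorem det_transpose_mul_eq_sum_det_submatrix_mul {m n : ℕ} (hn : n ≤ m)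
    (A B : Matrix (Fin m) (Fin n) ℝ) :
    (Aᵀ * B).det =
      ∑ f : Fin n ↪o Fin m, (A.submatrix f id).det * (B.submatrix f id).det := by
  have h1 : (Aᵀ * B).det = ∑ g : Fin n → Fin m, ∑ σ : Equiv.Perm (Fin n),
      Equiv.Perm.sign σ * ∏ i, A (g i) (σ i) * B (g i) i := by
    rw [det_apply']
    simp only [Matrix.mul_apply, Matrix.transpose_apply, Finset.prod_univ_sum,
      Finset.mul_sum, Fintype.piFinset_univ]
    rw [Finset.sum_comm]
  have h2 : ∀ g : Fin n → Fin m, (∑ σ : Equiv.Perm (Fin n),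
      Equiv.Perm.sign σ * ∏ i, A (g i) (σ i) * B (g i) i)
        = (A.submatrix g id).det * ∏ i, B (g i) i := by
    intro g
    rw [det_sub_eq, Finset.sum_mul]
    refine Finset.sum_congr rfl fun σ _ => ?_
    rw [Finset.prod_mul_distrib, mul_assoc]
  rw [h1]
  simp only [h2]
  rw [← Finset.sum_filter_of_ne (p := fun g : Fin n → Fin m => Function.Injective g)
    (by intro g _ hne; by_contra hg; exact hne (by rw [det_sub_zero A hg, zero_mul]))]
  rw [sum_inj (fun g => (A.submatrix g id).det * ∏ i, B (g i) i)]
  rw [Fintype.sum_prod_type]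
  refine Finset.sum_congr rfl fun f _ => ?_
  have key : ∀ σ : Equiv.Perm (Fin n),
      (A.submatrix (⇑f ∘ ⇑σ) id).det = Equiv.Perm.sign σ * (A.submatrix ⇑f id).det := by
    intro σ
    have : A.submatrix (⇑f ∘ ⇑σ) id = (A.submatrix ⇑f id).submatrix ⇑σ id := by
      ext i j; simp [Matrix.submatrix]
    rw [this, Matrix.det_permute]
  calc ∑ σ : Equiv.Perm (Fin n), (A.submatrix (⇑f ∘ ⇑σ) id).det * ∏ i, B ((⇑f ∘ ⇑σ) i) i
      = (A.submatrix ⇑f id).det * ∑ σ : Equiv.Perm (Fin n),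
          Equiv.Perm.sign σ * ∏ i, B (f (σ i)) i := by
        rw [Finset.mul_sum]
        refine Finset.sum_congr rfl fun σ _ => ?_
        rw [key σ]
        simp only [Function.comp_apply]
        ring
    _ = (A.submatrix ⇑f id).det * (B.submatrix ⇑f id).det := by
        congr 1
        rw [det_apply']
        refine Finset.sum_congr rfl fun σ _ => ?_
        congr 1
end

section
/- Define, for a real m×n matrix A with n ≤ m, gdet A = Σ_f (-1)^(Σ_{j} (f j + j)) det(A.submatrix f id), the sum running over strictly monotone maps f : Fin n → Fin m. Then for every real (m+1)×(n+1) matrix A with n+1 ≤ m+1, this function satisfies the Laplace expansion along the first column: gdet A = Σ_{i : Fin (m+1)} (-1)^i · A i 0 · gdet(A.submatrix i.succAbove Fin.succ), where A.submatrix i.succAbove Fin.succ is the m×n matrix obtained from A by deleting row i and column 0. -/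
open Matrix

/-- The g-determinant of a tall real matrix: the signed sum of the determinants of the
maximal square submatrices, over strictly monotone row-selection maps. -/
noncomputable def gdet {m n : ℕ} (A : Matrix (Fin m) (Fin n) ℝ) : ℝ :=
  ∑ f : Fin n ↪o Fin m,
    (-1 : ℝ) ^ (∑ j : Fin n, ((f j : ℕ) + (j : ℕ))) * (A.submatrix f id).det

section Aux

variable {m n : ℕ}

/-- Delete position `k` from a strictly monotone map `f`, relabelling the codomain by
removing the value `f k`. -/
noncomputable def gmap (f : Fin (n + 1) ↪o Fin (m + 1)) (k : Fin (n + 1)) : Fin n ↪o Fin m :=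
  (OrderEmbedding.ofStrictMono
      (fun j => (⟨f (k.succAbove j), f.injective.ne (k.succAbove_ne j)⟩ :
        {x : Fin (m + 1) // x ≠ f k}))
      (fun a b hab => by
        simpa [Subtype.mk_lt_mk] using
          f.strictMono ((Fin.succAbove_lt_succAbove_iff (p := k)).mpr hab))).trans
    (finSuccAboveOrderIso (f k)).symm.toOrderEmbedding

lemma succAbove_gmap (f : Fin (n + 1) ↪o Fin (m + 1)) (k : Fin (n + 1)) (j : Fin n) :
    (f k).succAbove (gmap f k j) = f (k.succAbove j) := by
  have h1 : finSuccAboveOrderIso (f k) (gmap f k j)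
      = ⟨f (k.succAbove j), f.injective.ne (k.succAbove_ne j)⟩ :=
    (finSuccAboveOrderIso (f k)).apply_symm_apply _
  have h2 := congrArg Subtype.val h1
  rwa [finSuccAboveOrderIso_apply] at h2

/-- The row set associated to a pair `(i, g)`. -/
def rowSet (i : Fin (m + 1)) (g : Fin n ↪o Fin m) : Finset (Fin (m + 1)) :=
  insert i (Finset.univ.image fun j => i.succAbove (g j))

lemma not_mem_image_rowSet (i : Fin (m + 1)) (g : Fin n ↪o Fin m) :
    i ∉ Finset.univ.image fun j => i.succAbove (g j) := by
  simp only [Finset.mem_image, Finset.mem_univ, true_and, not_exists]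
  exact fun j => Fin.succAbove_ne i (g j)

lemma card_rowSet (i : Fin (m + 1)) (g : Fin n ↪o Fin m) : (rowSet i g).card = n + 1 := by
  rw [rowSet, Finset.card_insert_of_notMem (not_mem_image_rowSet i g),
    Finset.card_image_of_injective _
      (fun a b hab => g.injective (Fin.succAbove_right_injective hab)),
    Finset.card_univ, Fintype.card_fin]

noncomputable def fmap (i : Fin (m + 1)) (g : Fin n ↪o Fin m) : Fin (n + 1) ↪o Fin (m + 1) :=
  (rowSet i g).orderEmbOfFin (card_rowSet i g)

noncomputable def kmap (i : Fin (m + 1)) (g : Fin n ↪o Fin m) : Fin (n + 1) :=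
  ((rowSet i g).orderIsoOfFin (card_rowSet i g)).symm ⟨i, Finset.mem_insert_self _ _⟩

lemma fmap_kmap (i : Fin (m + 1)) (g : Fin n ↪o Fin m) : fmap i g (kmap i g) = i := by
  have h := Finset.coe_orderIsoOfFin_apply (rowSet i g) (card_rowSet i g) (kmap i g)
  rw [kmap, OrderIso.apply_symm_apply] at h
  exact h.symm

lemma card_image_rowSet (i : Fin (m + 1)) (g : Fin n ↪o Fin m) :
    (Finset.univ.image fun j => i.succAbove (g j)).card = n := by
  rw [Finset.card_image_of_injective _
      (fun a b hab => g.injective (Fin.succAbove_right_injective hab)),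
    Finset.card_univ, Fintype.card_fin]

lemma fmap_succAbove (i : Fin (m + 1)) (g : Fin n ↪o Fin m) (j : Fin n) :
    fmap i g ((kmap i g).succAbove j) = i.succAbove (g j) := by
  set t : Finset (Fin (m + 1)) := Finset.univ.image fun j => i.succAbove (g j) with ht
  have h1 : (fun j : Fin n => fmap i g ((kmap i g).succAbove j))
      = t.orderEmbOfFin (card_image_rowSet i g) := by
    apply Finset.orderEmbOfFin_unique
    · intro x
      have hmem : fmap i g ((kmap i g).succAbove x) ∈ rowSet i g :=
        Finset.orderEmbOfFin_mem _ _ _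
      have hne : fmap i g ((kmap i g).succAbove x) ≠ i := fun h =>
        (kmap i g).succAbove_ne x ((fmap i g).injective (h.trans (fmap_kmap i g).symm))
      rcases Finset.mem_insert.mp hmem with h | h
      · exact absurd h hne
      · exact h
    · exact fun a b hab =>
        (fmap i g).strictMono (Fin.succAbove_lt_succAbove_iff.mpr hab)
  have h2 : (fun j : Fin n => i.succAbove (g j))
      = t.orderEmbOfFin (card_image_rowSet i g) := by
    apply Finset.orderEmbOfFin_unique
    · intro x
      exact Finset.mem_image_of_mem _ (Finset.mem_univ x)
    · exact fun a b hab =>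
        Fin.succAbove_lt_succAbove_iff.mpr (g.strictMono hab)
  exact congrFun (h1.trans h2.symm) j

lemma fmap_gmap (f : Fin (n + 1) ↪o Fin (m + 1)) (k : Fin (n + 1)) :
    fmap (f k) (gmap f k) = f := by
  symm
  apply Finset.orderEmbOfFin_unique'
  intro l
  rcases eq_or_ne l k with rfl | hl
  · exact Finset.mem_insert_self _ _
  · obtain ⟨j, hj⟩ := Fin.exists_succAbove_eq hl
    apply Finset.mem_insert_of_mem
    rw [← hj, ← succAbove_gmap f k j]
    exact Finset.mem_image_of_mem _ (Finset.mem_univ j)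

lemma kmap_gmap (f : Fin (n + 1) ↪o Fin (m + 1)) (k : Fin (n + 1)) :
    kmap (f k) (gmap f k) = k := by
  rw [kmap, OrderIso.symm_apply_eq]
  apply Subtype.ext
  rw [Finset.coe_orderIsoOfFin_apply]
  exact (DFunLike.congr_fun (fmap_gmap f k) k).symm

/-- The key equivalence between pairs `(f, k)` and pairs `(i, g)`. -/
noncomputable def laplaceEquiv :
    ((Fin (n + 1) ↪o Fin (m + 1)) × Fin (n + 1)) ≃ (Fin (m + 1) × (Fin n ↪o Fin m)) where
  toFun p := (p.1 p.2, gmap p.1 p.2)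
  invFun q := (fmap q.1 q.2, kmap q.1 q.2)
  left_inv p := by
    obtain ⟨f, k⟩ := p
    exact Prod.ext (fmap_gmap f k) (kmap_gmap f k)
  right_inv q := by
    obtain ⟨i, g⟩ := q
    refine Prod.ext (fmap_kmap i g) ?_
    refine RelEmbedding.ext fun j => ?_
    apply Fin.succAbove_right_injective (p := i)
    have h1 := succAbove_gmap (fmap i g) (kmap i g) j
    rw [fmap_kmap, fmap_succAbove] at h1
    exact h1

lemma sign_eq (f : Fin (n + 1) ↪o Fin (m + 1)) (k : Fin (n + 1)) :
    (-1 : ℝ) ^ (∑ l : Fin (n + 1), ((f l : ℕ) + (l : ℕ))) * (-1) ^ (k : ℕ)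
      = (-1) ^ (f k : ℕ) * (-1) ^ (∑ j : Fin n, ((gmap f k j : ℕ) + (j : ℕ))) := by
  have hterm : ∀ j : Fin n,
      ((f (k.succAbove j) : ℕ) + ((k.succAbove j : Fin (n + 1)) : ℕ))
        = (((gmap f k j : ℕ) + (j : ℕ)) + if (j : ℕ) < (k : ℕ) then 0 else 2) := by
    intro j
    rcases lt_or_ge j.castSucc k with h | h
    · have h2 : k.succAbove j = j.castSucc := Fin.succAbove_of_castSucc_lt _ _ h
      have h3 : f (k.succAbove j) < f k := f.strictMono (by rw [h2]; exact h)
      rw [← succAbove_gmap f k j] at h3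
      have h4 : (gmap f k j).castSucc < f k :=
        (Fin.succAbove_lt_iff_castSucc_lt _ _).mp h3
      have hjk : (j : ℕ) < (k : ℕ) := by simpa [Fin.lt_iff_val_lt_val] using h
      rw [← succAbove_gmap f k j, Fin.succAbove_of_castSucc_lt _ _ h4, h2]
      simp [hjk]
    · have h2 : k.succAbove j = j.succ := Fin.succAbove_of_le_castSucc _ _ h
      have h3 : f k < f (k.succAbove j) :=
        f.strictMono (by rw [h2]; exact lt_of_le_of_lt h (Fin.castSucc_lt_succ : j.castSucc < j.succ))
      rw [← succAbove_gmap f k j] at h3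
      have h4 : f k ≤ (gmap f k j).castSucc :=
        (Fin.lt_succAbove_iff_le_castSucc _ _).mp h3
      have hjk : ¬ (j : ℕ) < (k : ℕ) := not_lt.mpr (by simpa [Fin.le_iff_val_le_val] using h)
      rw [← succAbove_gmap f k j, Fin.succAbove_of_le_castSucc _ _ h4, h2]
      simp [hjk, Fin.val_succ]
      omega
  have hsplit : (∑ l : Fin (n + 1), ((f l : ℕ) + (l : ℕ)))
      = ((f k : ℕ) + (k : ℕ))
        + ∑ j : Fin n, ((f (k.succAbove j) : ℕ) + ((k.succAbove j : Fin (n + 1)) : ℕ)) :=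
    Fin.sum_univ_succAbove (fun l => ((f l : ℕ) + (l : ℕ))) k
  have hsum : (∑ l : Fin (n + 1), ((f l : ℕ) + (l : ℕ))) + (k : ℕ)
      = ((f k : ℕ) + ∑ j : Fin n, ((gmap f k j : ℕ) + (j : ℕ)))
        + (2 * (k : ℕ) + ∑ j : Fin n, if (j : ℕ) < (k : ℕ) then 0 else 2) := by
    rw [hsplit, Finset.sum_congr rfl (fun j _ => hterm j), Finset.sum_add_distrib]
    ring
  have heven : Even (2 * (k : ℕ) + ∑ j : Fin n, if (j : ℕ) < (k : ℕ) then 0 else 2) := by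
    refine Even.add ⟨(k : ℕ), by ring⟩ (Finset.even_sum _ fun j _ => ?_)
    split <;> simp
  rw [← pow_add, ← pow_add, hsum, pow_add, Even.neg_one_pow heven, mul_one]

end Aux

set_option maxHeartbeats 1000000 in
/-- The g-determinant satisfies the Laplace expansion along the first column. -/
theorem gdet_laplace_first_column {m n : ℕ} (hn : n + 1 ≤ m + 1)
    (A : Matrix (Fin (m + 1)) (Fin (n + 1)) ℝ) :
    gdet A = ∑ i : Fin (m + 1),
      (-1 : ℝ) ^ (i : ℕ) * A i 0 * gdet (A.submatrix i.succAbove Fin.succ) := by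
  rw [gdet]
  calc
    ∑ f : Fin (n + 1) ↪o Fin (m + 1),
        (-1 : ℝ) ^ (∑ l : Fin (n + 1), ((f l : ℕ) + (l : ℕ))) * (A.submatrix f id).det
      = ∑ f : Fin (n + 1) ↪o Fin (m + 1), ∑ k : Fin (n + 1),
          (-1 : ℝ) ^ (∑ l : Fin (n + 1), ((f l : ℕ) + (l : ℕ)))
            * ((-1) ^ (k : ℕ) * A (f k) 0
              * (A.submatrix (fun j => f (k.succAbove j)) Fin.succ).det) := by
        refine Finset.sum_congr rfl fun f _ => ?_
        rw [Matrix.det_succ_column_zero, Finset.mul_sum]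
        refine Finset.sum_congr rfl fun k _ => ?_
        rw [Matrix.submatrix_submatrix]
        rfl
    _ = ∑ p : (Fin (n + 1) ↪o Fin (m + 1)) × Fin (n + 1),
          (-1 : ℝ) ^ (∑ l : Fin (n + 1), ((p.1 l : ℕ) + (l : ℕ)))
            * ((-1) ^ (p.2 : ℕ) * A (p.1 p.2) 0
              * (A.submatrix (fun j => p.1 (p.2.succAbove j)) Fin.succ).det) := by
        rw [← Finset.sum_product', Finset.univ_product_univ]
    _ = ∑ q : Fin (m + 1) × (Fin n ↪o Fin m),
          (-1 : ℝ) ^ (q.1 : ℕ) * A q.1 0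
            * ((-1) ^ (∑ j : Fin n, ((q.2 j : ℕ) + (j : ℕ)))
              * (A.submatrix (fun j => q.1.succAbove (q.2 j)) Fin.succ).det) := by
        refine Fintype.sum_equiv laplaceEquiv _ _ fun p => ?_
        obtain ⟨f, k⟩ := p
        simp only [laplaceEquiv, Equiv.coe_fn_mk]
        rw [funext (succAbove_gmap f k)]
        linear_combination
          (A (f k) 0 * (A.submatrix (fun j => f (k.succAbove j)) Fin.succ).det) * sign_eq f k
    _ = ∑ i : Fin (m + 1),
        (-1 : ℝ) ^ (i : ℕ) * A i 0 * gdet (A.submatrix i.succAbove Fin.succ) := by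
        rw [Fintype.sum_prod_type]
        refine Finset.sum_congr rfl fun i _ => ?_
        rw [gdet, Finset.mul_sum]
        refine Finset.sum_congr rfl fun g _ => ?_
        rfl
end

section
/- Let A be a real m×n matrix with n ≤ m, let x : Fin n → ℝ and b : Fin m → ℝ satisfy A.mulVec x = b. Then for every column index j : Fin n, |x j| · detl A = detl(A.updateColumn j b); that is, |x j| · √(Σ_f det²(A.submatrix f id)) = √(Σ_f det²((A.updateColumn j b).submatrix f id)), the sums running over strictly monotone f : Fin n → Fin m. (This is the generalisation of Cramer's rule to the determinant-like function.) -/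
open Matrix

/-- The determinant-like function of a tall real matrix:
`detl A = √(∑_f det² (A.submatrix f id))`, the sum over strictly monotone `f : Fin n → Fin m`. -/
noncomputable def detl {m n : ℕ} (A : Matrix (Fin m) (Fin n) ℝ) : ℝ :=
  Real.sqrt (∑ f : Fin n ↪o Fin m, (A.submatrix f id).det ^ 2)

lemma det_updateColumn_mulVec {n : ℕ} (B : Matrix (Fin n) (Fin n) ℝ) (x : Fin n → ℝ)
    (j : Fin n) : (B.updateCol j (B.mulVec x)).det = x j * B.det := by
  have h := congrFun (Matrix.cramer_eq_adjugate_mulVec B (B.mulVec x)) j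
  rw [Matrix.cramer_apply] at h
  rw [h, Matrix.mulVec_mulVec, Matrix.adjugate_mul, Matrix.smul_mulVec,
    Matrix.one_mulVec]
  simp [mul_comm]

/-- Cramer's rule for the determinant-like function: if `A.mulVec x = b` then
`|x j| * detl A = detl (A with column j replaced by b)`. -/
theorem abs_mul_detl_eq_detl_updateColumn {m n : ℕ} (hn : n ≤ m)
    (A : Matrix (Fin m) (Fin n) ℝ) (x : Fin n → ℝ) (b : Fin m → ℝ)
    (hxb : A.mulVec x = b) (j : Fin n) :
    |x j| * detl A = detl (A.updateCol j b) := by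
  have key : ∀ f : Fin n ↪o Fin m,
      ((A.updateCol j b).submatrix f id).det = x j * (A.submatrix f id).det := by
    intro f
    have h1 : (A.updateCol j b).submatrix f id
        = (A.submatrix f id).updateCol j ((A.submatrix f id).mulVec x) := by
      ext i k
      simp only [Matrix.submatrix_apply, Matrix.updateCol_apply, id_eq]
      rcases eq_or_ne k j with rfl | hk
      · simp [← hxb, Matrix.mulVec, dotProduct]
      · simp [hk]
    rw [h1, det_updateColumn_mulVec]
  unfold detl
  rw [← Real.sqrt_sq_eq_abs (x j), ← Real.sqrt_mul (sq_nonneg _)]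
  congr 1
  rw [Finset.mul_sum]
  exact Finset.sum_congr rfl fun f _ => by rw [key f]; ring
end

section
/- Let A be a real m×n matrix with n ≤ m, let x : Fin n → ℝ and b : Fin m → ℝ satisfy A.mulVec x = b. Then the vector determinants are proportional with factor x j: for every column index j : Fin n and every strictly monotone map f : Fin n → Fin m, x j · det(A.submatrix f id) = det((A.updateColumn j b).submatrix f id); i.e., x j • vdet A = vdet(A.updateColumn j b). -/
open Matrix

/-- The vector determinant of a tall real matrix: the family of determinants of its maximal
square submatrices, indexed by the strictly monotone maps `f : Fin n → Fin m`. -/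
noncomputable def vdet {m n : ℕ} (A : Matrix (Fin m) (Fin n) ℝ) : (Fin n ↪o Fin m) → ℝ :=
  fun f => (A.submatrix f id).det

/-- Cramer's rule for the vector determinant: if `A.mulVec x = b` then for every column
index `j`, `x j • vdet A = vdet (A with column j replaced by b)`, componentwise over all
strictly monotone `f : Fin n → Fin m`. -/
theorem smul_vdet_eq_vdet_updateColumn {m n : ℕ} (hn : n ≤ m)
    (A : Matrix (Fin m) (Fin n) ℝ) (x : Fin n → ℝ) (b : Fin m → ℝ)
    (hxb : A.mulVec x = b) (j : Fin n) :
    (∀ f : Fin n ↪o Fin m,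
      x j * (A.submatrix f id).det = ((A.updateCol j b).submatrix f id).det) ∧
    x j • vdet A = vdet (A.updateCol j b) := by
  have key : ∀ f : Fin n ↪o Fin m,
      x j * (A.submatrix f id).det = ((A.updateCol j b).submatrix f id).det := by
    intro f
    set M := A.submatrix f id with hM
    have h1 : M.mulVec x = b ∘ f := by
      funext i
      simp only [mulVec, dotProduct, hM, submatrix_apply, id_eq, Function.comp_apply]
      rw [← hxb]
      rfl
    have h2 : (A.updateCol j b).submatrix f id = M.updateCol j (b ∘ f) := by
      ext i k
      by_cases h : k = j <;> simp [updateCol_apply, h, hM]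
    rw [h2]
    have h3 : cramer M (M.mulVec x) = M.det • x := by
      rw [cramer_eq_adjugate_mulVec, mulVec_mulVec, adjugate_mul, smul_mulVec,
        one_mulVec]
    have := congrFun h3 j
    rw [h1] at this
    rw [cramer_apply] at this
    rw [this]
    simp [mul_comm]
  refine ⟨key, ?_⟩
  funext f
  simpa [vdet] using key f
end

section
/- Adding a scalar multiple of one column to another column leaves the determinant-like function invariant: for a real m×n matrix A with n ≤ m, distinct column indices i ≠ j in Fin n, and k : ℝ, detl(A.updateColumn i (fun r => A r i + k * A r j)) = detl A; equivalently the sum Σ_f det²(·.submatrix f id) over strictly monotone f : Fin n → Fin m is unchanged. -/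
open Matrix

/-- Adding a scalar multiple of one column to another leaves the determinant-like function
invariant, and likewise the underlying sum of squared maximal subdeterminants. -/
theorem detl_updateColumn_add_smul {m n : ℕ} (hn : n ≤ m)
    (A : Matrix (Fin m) (Fin n) ℝ) (i j : Fin n) (hij : i ≠ j) (k : ℝ) :
    detl (A.updateCol i (fun r => A r i + k * A r j)) = detl A ∧
    (∑ f : Fin n ↪o Fin m,
        ((A.updateCol i (fun r => A r i + k * A r j)).submatrix f id).det ^ 2) =
      ∑ f : Fin n ↪o Fin m, (A.submatrix f id).det ^ 2 := by
  have key : (∑ f : Fin n ↪o Fin m,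
        ((A.updateCol i (fun r => A r i + k * A r j)).submatrix f id).det ^ 2) =
      ∑ f : Fin n ↪o Fin m, (A.submatrix f id).det ^ 2 := by
    refine Finset.sum_congr rfl fun f _ => ?_
    have hsub : ((A.updateCol i (fun r => A r i + k * A r j)).submatrix f id) =
        (A.submatrix f id).updateCol i (fun r => (A.submatrix f id) r i +
          k * (A.submatrix f id) r j) := by
      ext r c
      by_cases hc : c = i
      · subst hc; simp [updateCol_self, submatrix_apply]
      · simp [updateCol_ne hc, submatrix_apply]
    rw [hsub]
    have := det_updateCol_add_smul_self (A.submatrix (⇑f) id) hij k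
    simpa [smul_eq_mul] using congrArg (· ^ 2) this
  exact ⟨by unfold detl; rw [key], key⟩
end

section
/- The determinant-like function is invariant under arbitrary permutations of the rows and of the columns: for any real m×n matrix A with n ≤ m, any permutation σ of Fin m and any permutation τ of Fin n, detl(A.submatrix σ τ) = detl A; equivalently Σ_f det²((A.submatrix σ τ).submatrix f id) = Σ_f det²(A.submatrix f id), the sums running over strictly monotone f : Fin n → Fin m. -/
open Matrix

variable {m n : ℕ}

noncomputable def msorted (e : Fin n ↪ Fin m) : Fin n ↪o Fin m :=
  (Finset.univ.map e).orderEmbOfFin (by simp)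

lemma msorted_range (e : Fin n ↪ Fin m) :
    Finset.univ.map (msorted e).toEmbedding = Finset.univ.map e := by
  apply Finset.coe_injective
  rw [Finset.coe_map, Finset.coe_univ, Set.image_univ]
  exact Finset.range_orderEmbOfFin _ _

lemma msorted_congr {e e' : Fin n ↪ Fin m} (h : Finset.univ.map e = Finset.univ.map e') :
    msorted e = msorted e' := by
  simp only [msorted, h]

lemma msorted_orderEmb (f : Fin n ↪o Fin m) : msorted f.toEmbedding = f :=
  ((Finset.univ.map f.toEmbedding).orderEmbOfFin_unique' (by simp)
    (fun i => by simp)).symm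

lemma exists_perm (e : Fin n ↪ Fin m) :
    ∃ π : Equiv.Perm (Fin n), ∀ i, e i = msorted e (π i) := by
  have h : ∀ i, ∃ j, msorted e j = e i := by
    intro i
    have : e i ∈ Set.range (msorted e) := by
      rw [show Set.range (msorted e) = Set.range ((msorted e).toEmbedding) from rfl]
      rw [← Set.image_univ, ← Finset.coe_univ, ← Finset.coe_map, msorted_range]
      simp
    exact this
  choose p hp using h
  have hpinj : Function.Injective p := fun i j hij => e.injective (by rw [← hp, ← hp, hij])
  exact ⟨Equiv.ofBijective p ((Finite.injective_iff_bijective).1 hpinj),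
    fun i => (hp i).symm⟩

lemma det_sq_msorted (A : Matrix (Fin m) (Fin n) ℝ) (e : Fin n ↪ Fin m) :
    (A.submatrix e id).det ^ 2 = (A.submatrix (msorted e) id).det ^ 2 := by
  obtain ⟨π, hπ⟩ := exists_perm e
  have h : A.submatrix e id = (A.submatrix (msorted e) id).submatrix π id := by
    ext i j; simp [hπ]
  rw [h, Matrix.det_permute]
  rcases Int.units_eq_one_or π.sign with hs | hs <;> simp [hs]

lemma phi_psi (σ : Equiv.Perm (Fin m)) (f : Fin n ↪o Fin m) :
    msorted ((msorted (f.toEmbedding.trans σ.symm.toEmbedding)).toEmbedding.trans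
      σ.toEmbedding) = f := by
  have h : Finset.univ.map ((msorted (f.toEmbedding.trans σ.symm.toEmbedding)).toEmbedding.trans
      σ.toEmbedding) = Finset.univ.map f.toEmbedding := by
    rw [← Finset.map_map, msorted_range, ← Finset.map_map, Finset.map_map]
    ext x
    simp
  rw [msorted_congr h, msorted_orderEmb]

theorem detl_submatrix_perm' {m n : ℕ} (hn : n ≤ m)
    (A : Matrix (Fin m) (Fin n) ℝ) (σ : Equiv.Perm (Fin m)) (τ : Equiv.Perm (Fin n)) :
    (∑ f : Fin n ↪o Fin m, ((A.submatrix σ τ).submatrix f id).det ^ 2) =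
      ∑ f : Fin n ↪o Fin m, (A.submatrix f id).det ^ 2 := by
  have step1 : ∀ f : Fin n ↪o Fin m,
      ((A.submatrix σ τ).submatrix f id).det ^ 2
        = (A.submatrix (msorted (f.toEmbedding.trans σ.toEmbedding)) id).det ^ 2 := by
    intro f
    have h1 : (A.submatrix σ τ).submatrix f id
        = (A.submatrix (f.toEmbedding.trans σ.toEmbedding) id).submatrix id τ := by
      ext i j; simp [Matrix.submatrix]
    have h2 := det_sq_msorted A (f.toEmbedding.trans σ.toEmbedding)
    rw [h1, Matrix.det_permute', ← h2]
    rcases Int.units_eq_one_or τ.sign with hs | hs <;> simp [hs]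
  have hb : Function.Bijective
      (fun f : Fin n ↪o Fin m => msorted (f.toEmbedding.trans σ.toEmbedding)) :=
    (Equiv.mk (fun f : Fin n ↪o Fin m => msorted (f.toEmbedding.trans σ.toEmbedding))
      (fun f => msorted (f.toEmbedding.trans σ.symm.toEmbedding))
      (fun f => by simpa using phi_psi σ.symm f) (fun f => phi_psi σ f)).bijective
  rw [Finset.sum_congr rfl (fun f _ => step1 f)]
  exact Fintype.sum_bijective _ hb _ _ (fun f => rfl)

/-- The determinant-like function is invariant under arbitrary permutations of the rows and
of the columns, and likewise the underlying sum of squared maximal subdeterminants. -/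
theorem detl_submatrix_perm {m n : ℕ} (hn : n ≤ m)
    (A : Matrix (Fin m) (Fin n) ℝ) (σ : Equiv.Perm (Fin m)) (τ : Equiv.Perm (Fin n)) :
    detl (A.submatrix σ τ) = detl A ∧
    (∑ f : Fin n ↪o Fin m, ((A.submatrix σ τ).submatrix f id).det ^ 2) =
      ∑ f : Fin n ↪o Fin m, (A.submatrix f id).det ^ 2 := by
  have key := detl_submatrix_perm' hn A σ τ
  exact ⟨by rw [detl, detl, key], key⟩
end

section
/- The determinant-like function is not multiplicative: there exist a real 3×2 matrix A and a real 2×1 matrix B such that detl(A * B) ≠ detl A · detl B, where detl of an m×n matrix (n ≤ m) is √(Σ_f det²(·.submatrix f id)) over strictly monotone f : Fin n → Fin m. -/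
open Matrix

/-- The determinant-like function is not multiplicative: there exist a real `3 × 2` matrix
`A` and a real `2 × 1` matrix `B` with `detl (A * B) ≠ detl A * detl B`. -/
theorem detl_not_multiplicative :
    ∃ (A : Matrix (Fin 3) (Fin 2) ℝ) (B : Matrix (Fin 2) (Fin 1) ℝ),
      detl (A * B) ≠ detl A * detl B := by
  refine ⟨Matrix.of fun _ _ => 1, Matrix.of ![![1], ![0]], ?_⟩
  have hA : detl ((Matrix.of fun _ _ => (1 : ℝ)) : Matrix (Fin 3) (Fin 2) ℝ) = 0 := by
    unfold detl
    have : ∀ f : Fin 2 ↪o Fin 3,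
        (((Matrix.of fun _ _ => (1 : ℝ)) : Matrix (Fin 3) (Fin 2) ℝ).submatrix f id).det ^ 2 = 0 := by
      intro f
      rw [Matrix.det_fin_two]
      simp
    rw [Finset.sum_congr rfl fun f _ => this f]
    simp
  have hAB : ((Matrix.of fun _ _ => (1 : ℝ)) : Matrix (Fin 3) (Fin 2) ℝ) * ((Matrix.of ![![1], ![0]]) : Matrix (Fin 2) (Fin 1) ℝ) =
      ((Matrix.of fun _ _ => (1 : ℝ)) : Matrix (Fin 3) (Fin 1) ℝ) := by
    ext i j
    simp [Matrix.mul_apply, Fin.sum_univ_two]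
  rw [hAB, hA, mul_comm, mul_zero]
  have : detl ((Matrix.of fun _ _ => (1 : ℝ)) : Matrix (Fin 3) (Fin 1) ℝ) =
      Real.sqrt (Fintype.card (Fin 1 ↪o Fin 3)) := by
    unfold detl
    congr 1
    rw [Fintype.card_eq_sum_ones]
    push_cast
    refine Finset.sum_congr rfl fun f _ => ?_
    rw [Matrix.det_fin_one]
    simp
  rw [this]
  have hpos : 0 < Fintype.card (Fin 1 ↪o Fin 3) :=
    Fintype.card_pos_iff.mpr ⟨Fin.castLEOrderEmb (by norm_num)⟩
  intro h
  have h1 := Real.sqrt_eq_zero'.mp h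
  have h2 : (0 : ℝ) < Fintype.card (Fin 1 ↪o Fin 3) := by exact_mod_cast hpos
  linarith
end

section
/- For the 3×2 case, the determinant-like function equals the magnitude of the cross product: for any u, v : Fin 3 → ℝ, if A is the 3×2 real matrix whose first column is u and second column is v, then detl A = √(Σ_f det²(A.submatrix f id)) equals the Euclidean norm of the cross product u ×₃ v (Mathlib's crossProduct u v), i.e., √((crossProduct u v 0)² + (crossProduct u v 1)² + (crossProduct u v 2)²). -/
open Matrix

private def e0 : Fin 2 ↪o Fin 3 := OrderEmbedding.ofStrictMono ![0, 1] (by decide)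
private def e1 : Fin 2 ↪o Fin 3 := OrderEmbedding.ofStrictMono ![0, 2] (by decide)
private def e2 : Fin 2 ↪o Fin 3 := OrderEmbedding.ofStrictMono ![1, 2] (by decide)

private lemma classify (f : Fin 2 ↪o Fin 3) : f = e0 ∨ f = e1 ∨ f = e2 := by
  have h01 : f 0 < f 1 := f.strictMono (by decide)
  obtain ⟨a, ha⟩ : ∃ a, f 0 = a := ⟨_, rfl⟩
  obtain ⟨b, hb⟩ : ∃ b, f 1 = b := ⟨_, rfl⟩
  rw [ha, hb] at h01
  have ext3 : ∀ g : Fin 2 ↪o Fin 3, f 0 = g 0 → f 1 = g 1 → f = g := by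
    intro g h0 h1
    apply DFunLike.ext
    intro i
    fin_cases i <;> assumption
  fin_cases a <;> fin_cases b <;> first
    | exact absurd h01 (by decide)
    | (left; exact ext3 e0 (by rw [ha]; decide) (by rw [hb]; decide))
    | (right; left; exact ext3 e1 (by rw [ha]; decide) (by rw [hb]; decide))
    | (right; right; exact ext3 e2 (by rw [ha]; decide) (by rw [hb]; decide))

private def E : Fin 3 ≃ (Fin 2 ↪o Fin 3) where
  toFun := ![e0, e1, e2]
  invFun f := if f 0 = 0 then (if f 1 = 1 then 0 else 1) else 2
  left_inv i := by fin_cases i <;> rfl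
  right_inv f := by
    rcases classify f with h | h | h <;> subst h <;> rfl

private lemma sum_emb (g : (Fin 2 ↪o Fin 3) → ℝ) :
    ∑ f : Fin 2 ↪o Fin 3, g f = g e0 + g e1 + g e2 := by
  rw [← E.sum_comp g]
  simp [Fin.sum_univ_three, E]

/-- In the `3 × 2` case the determinant-like function equals the Euclidean norm of the
cross product of the two columns. -/
theorem detl_eq_norm_crossProduct (u v : Fin 3 → ℝ) (A : Matrix (Fin 3) (Fin 2) ℝ)
    (hu : ∀ i, A i 0 = u i) (hv : ∀ i, A i 1 = v i) :
    detl A = Real.sqrt ((crossProduct u v 0) ^ 2 + (crossProduct u v 1) ^ 2 +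
      (crossProduct u v 2) ^ 2) := by
  unfold detl
  rw [sum_emb]
  congr 1
  rw [Matrix.det_fin_two, Matrix.det_fin_two, Matrix.det_fin_two]
  simp [Matrix.det_fin_two, e0, e1, e2, crossProduct, hu, hv]
  ring
end

section
/- The scalar generalised determinant tdet A = Σ_f det(A.submatrix f id) (sum over strictly monotone f : Fin n → Fin m) satisfies the same three properties as the vector determinant: (i) it is linear in each column: tdet(A.updateColumn j (a • u + b • v)) = a · tdet(A.updateColumn j u) + b · tdet(A.updateColumn j v); (ii) it vanishes whenever two distinct columns of A are equal; (iii) it is normalised: if E is the m×n matrix with E i j = 1 when (i : ℕ) = (j : ℕ) and 0 otherwise, then tdet E = 1. In particular tdet is a generalisation distinct from the vector determinant satisfying the properties of linearity, irreflexivity and normalisation. -/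
set_option linter.deprecated false

open Matrix

/-- Joshi's scalar generalised determinant of a tall real matrix: the sum of the
determinants of its maximal square submatrices, over strictly monotone
`f : Fin n → Fin m`. -/
noncomputable def tdet {m n : ℕ} (A : Matrix (Fin m) (Fin n) ℝ) : ℝ :=
  ∑ f : Fin n ↪o Fin m, (A.submatrix f id).det

lemma submatrix_updateCol_comp {m n : ℕ} (A : Matrix (Fin m) (Fin n) ℝ) (j : Fin n)
    (c : Fin m → ℝ) (f : Fin n ↪o Fin m) :
    (A.updateCol j c).submatrix f id = (A.submatrix f id).updateCol j (fun i => c (f i)) := by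
  ext i k
  simp [Matrix.updateCol_apply]

/-- `tdet` satisfies the three properties claimed to define the vector determinant:
(i) linearity in each column, (ii) it vanishes whenever two distinct columns are equal,
and (iii) normalisation: `tdet E = 1` where `E` is the `m × n` matrix whose columns are
the first `n` standard basis vectors of `ℝ^m`. -/
theorem tdet_linear_irreflexive_normalised {m n : ℕ} (hn : n ≤ m) :
    (∀ (A : Matrix (Fin m) (Fin n) ℝ) (j : Fin n) (a b : ℝ) (u v : Fin m → ℝ),
      tdet (A.updateCol j (a • u + b • v)) =
        a * tdet (A.updateCol j u) + b * tdet (A.updateCol j v)) ∧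
    (∀ (A : Matrix (Fin m) (Fin n) ℝ) (j₁ j₂ : Fin n), j₁ ≠ j₂ →
      (∀ i, A i j₁ = A i j₂) → tdet A = 0) ∧
    tdet (Matrix.of fun (i : Fin m) (j : Fin n) =>
      if (i : ℕ) = (j : ℕ) then (1 : ℝ) else 0) = 1 := by
  refine ⟨?_, ?_, ?_⟩
  · intro A j a b u v
    unfold tdet
    rw [Finset.mul_sum, Finset.mul_sum, ← Finset.sum_add_distrib]
    refine Finset.sum_congr rfl fun f _ => ?_
    rw [submatrix_updateCol_comp, submatrix_updateCol_comp, submatrix_updateCol_comp]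
    have hfun : (fun i => (a • u + b • v) (f i)) =
        a • (fun i => u (f i)) + b • (fun i => v (f i)) := by
      funext i; simp
    rw [hfun, Matrix.det_updateCol_add]
    congr 1
    · rw [Matrix.det_updateCol_smul]
    · rw [Matrix.det_updateCol_smul]
  · intro A j₁ j₂ hne h
    unfold tdet
    refine Finset.sum_eq_zero fun f _ => ?_
    exact Matrix.det_zero_of_column_eq hne fun k => h (f k)
  · unfold tdet
    classical
    rw [Finset.sum_eq_single (Fin.castLEOrderEmb hn : Fin n ↪o Fin m)]
    · have h1 : (Matrix.of fun (i : Fin m) (j : Fin n) =>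
          if (i : ℕ) = (j : ℕ) then (1 : ℝ) else 0).submatrix
          (Fin.castLEOrderEmb hn : Fin n ↪o Fin m) id = 1 := by
        ext i j
        simp [Matrix.one_apply, Fin.ext_iff]
      rw [h1, Matrix.det_one]
    · intro f _ hf
      by_cases hall : ∀ i : Fin n, (f i : ℕ) < n
      · exfalso
        apply hf
        have key : StrictMono (fun i : Fin n => (⟨(f i : ℕ), hall i⟩ : Fin n)) := by
          intro i j hij
          exact Fin.mk_lt_mk.mpr (f.strictMono hij)
        have hsurj : Function.Surjective (fun i : Fin n => (⟨(f i : ℕ), hall i⟩ : Fin n)) :=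
          Finite.injective_iff_surjective.mp key.injective
        have hrange : Set.range (fun i : Fin n => (⟨(f i : ℕ), hall i⟩ : Fin n)) =
            Set.range (id : Fin n → Fin n) := by
          rw [Set.range_eq_univ.mpr hsurj, Set.range_id]
        have heq := (key.range_inj strictMono_id).mp hrange
        have hval : ∀ i : Fin n, (f i : ℕ) = (i : ℕ) := fun i =>
          congrArg Fin.val (congrFun heq i)
        ext i
        simp [hval i]
      · push_neg at hall
        obtain ⟨i, hi⟩ := hall
        apply Matrix.det_eq_zero_of_row_eq_zero i
        intro j
        simp only [Matrix.submatrix_apply, id, Matrix.of_apply]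
        rw [if_neg]
        omega
    · intro h
      exact absurd (Finset.mem_univ _) h
end

section
/- Let m ≥ 3 and let P : Fin m → (Fin 2 → ℝ) be the vertices of a polygon in ℝ². Let M be the real m×2 matrix whose i-th row is P i + P (i+1), indices taken cyclically (i+1 computed modulo m). Then gdet M = Σ_{i : Fin m} (P i 0 · P (i+1) 1 − P (i+1) 0 · P i 1); that is, half the g-determinant of M equals the shoelace expression ½ Σ_i (x_i y_{i+1} − x_{i+1} y_i) for the (signed) area of the polygon. -/
open Matrix

namespace GdetShoelaceAux

open Finset

/-- Pairs `i < j` in `Fin N` are equivalent to order embeddings `Fin 2 ↪o Fin N`. -/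
def pairEquiv (N : ℕ) : {p : Fin N × Fin N // p.1 < p.2} ≃ (Fin 2 ↪o Fin N) where
  toFun p := OrderEmbedding.ofStrictMono (fun k => if k = 0 then p.1.1 else p.1.2)
    (by intro a b h; fin_cases a <;> fin_cases b <;> simp_all <;> exact p.2)
  invFun f := ⟨(f 0, f 1), f.strictMono (by decide)⟩
  left_inv p := by ext <;> rfl
  right_inv f := by
    ext k
    fin_cases k <;> simp

theorem gdet_two {N : ℕ} (A : Matrix (Fin N) (Fin 2) ℝ) :
    gdet A = ∑ p : {p : Fin N × Fin N // p.1 < p.2},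
      (-1:ℝ)^((p.1.1:ℕ)+(p.1.2:ℕ)+1) * (A p.1.1 0 * A p.1.2 1 - A p.1.2 0 * A p.1.1 1) := by
  unfold gdet
  rw [← Fintype.sum_equiv (pairEquiv N) _ _ ?_]
  intro p
  have h0 : (pairEquiv N p) 0 = p.1.1 := rfl
  have h1 : (pairEquiv N p) 1 = p.1.2 := rfl
  simp [h0, h1, Fin.sum_univ_two, Matrix.det_fin_two]
  ring_nf

theorem sub_to_range {N : ℕ} (F : ℕ → ℕ → ℝ) :
    ∑ p : {p : Fin N × Fin N // p.1 < p.2}, F p.1.1 p.1.2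
    = ∑ j ∈ range N, ∑ i ∈ range j, F i j := by
  classical
  rw [← Finset.sum_subtype (Finset.univ.filter fun p : Fin N × Fin N => p.1 < p.2)
      (by simp) (fun p => F p.1 p.2), Finset.sum_filter, Fintype.sum_prod_type,
      Finset.sum_comm]
  have h1 : ∀ j : Fin N, ∑ i : Fin N, (if i < j then F i j else 0)
      = ∑ i ∈ range (j : ℕ), F i j := by
    intro j
    simp only [Fin.lt_def]
    rw [Fin.sum_univ_eq_sum_range (fun a => if a < (j:ℕ) then F a j else 0) N]
    · rw [← Finset.sum_subset (Finset.range_subset_range.2 j.isLt.le)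
        (fun a _ ha => by simp [Finset.mem_range] at ha ⊢; omega)]
      exact Finset.sum_congr rfl fun a ha => by simp [Finset.mem_range.1 ha]
  rw [Finset.sum_congr rfl (fun j _ => h1 j)]
  exact Fin.sum_univ_eq_sum_range (fun b => ∑ i ∈ range b, F i b) N

theorem altTel (x : ℕ → ℝ) : ∀ N, ∑ i ∈ range N, (-1:ℝ)^i * (x i + x (i+1)) = x 0 - (-1)^N * x N := by
  intro N
  induction N with
  | zero => simp
  | succ N ih => rw [Finset.sum_range_succ, ih, pow_succ]; ring

theorem innerSum (x y : ℕ → ℝ) (N : ℕ) (a b : ℝ) :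
    ∑ i ∈ range N, (-1:ℝ)^(i+N+1) * ((x i + x (i+1)) * b - a * (y i + y (i+1))) =
      (-1)^(N+1) * ((x 0 - (-1)^N * x N) * b - a * (y 0 - (-1)^N * y N)) := by
  have : ∀ i ∈ range N, (-1:ℝ)^(i+N+1) * ((x i + x (i+1)) * b - a * (y i + y (i+1)))
      = ((-1)^(N+1) * b) * ((-1:ℝ)^i * (x i + x (i+1)))
        - ((-1)^(N+1) * a) * ((-1:ℝ)^i * (y i + y (i+1))) := by
    intro i _
    rw [show i + N + 1 = i + (N+1) by ring, pow_add]
    ring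
  rw [Finset.sum_congr rfl this, Finset.sum_sub_distrib, ← Finset.mul_sum, ← Finset.mul_sum,
    altTel x N, altTel y N]
  ring

theorem closedForm (x y : ℕ → ℝ) : ∀ N,
    ∑ j ∈ range N, ∑ i ∈ range j, (-1:ℝ)^(i+j+1) *
      ((x i + x (i+1)) * (y j + y (j+1)) - (x j + x (j+1)) * (y i + y (i+1)))
    = ∑ j ∈ range N, (x j * y (j+1) - x (j+1) * y j) + (-1)^N * (x 0 * y N - x N * y 0) := by
  intro N
  induction N with
  | zero => simp
  | succ N ih =>
    rw [Finset.sum_range_succ, ih, innerSum x y N (x N + x (N+1)) (y N + y (N+1)),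
      Finset.sum_range_succ (fun j => x j * y (j+1) - x (j+1) * y j), pow_succ]
    have hu : (-1:ℝ)^N * (-1)^N = 1 := by
      rw [← pow_add, Even.neg_one_pow ⟨N, rfl⟩]
    linear_combination (x N * y (N+1) - x (N+1) * y N) * hu

end GdetShoelaceAux

/-- Shoelace formula via the g-determinant: for a polygon with `m + 3` vertices
`P 0, …, P (m+2)` in `ℝ²`, the g-determinant of the matrix whose `i`-th row is
`P i + P (i + 1)` (indices cyclic) equals the shoelace sum
`∑ i, (x_i y_{i+1} − x_{i+1} y_i)`. -/
theorem gdet_cyclic_sum_eq_shoelace {m : ℕ} (P : Fin (m + 3) → Fin 2 → ℝ) :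
    gdet (Matrix.of fun (i : Fin (m + 3)) (j : Fin 2) => P i j + P (i + 1) j) =
      ∑ i : Fin (m + 3), (P i 0 * P (i + 1) 1 - P (i + 1) 0 * P i 1) := by
  open GdetShoelaceAux Finset Fin.NatCast in
  set x : ℕ → ℝ := fun a => P (a : Fin (m + 3)) 0 with hx
  set y : ℕ → ℝ := fun a => P (a : Fin (m + 3)) 1 with hy
  have hcast : ∀ v : Fin (m + 3), (((v : ℕ) + 1 : ℕ) : Fin (m + 3)) = v + 1 := by
    intro v
    push_cast
    simp [Fin.cast_val_eq_self]
  have hself : ∀ v : Fin (m + 3), (((v : ℕ) : ℕ) : Fin (m + 3)) = v := fun v => Fin.cast_val_eq_self v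
  rw [gdet_two]
  have e1 : ∀ p : {p : Fin (m + 3) × Fin (m + 3) // p.1 < p.2},
      (-1:ℝ)^((p.1.1:ℕ)+(p.1.2:ℕ)+1) *
        ((Matrix.of fun (i : Fin (m + 3)) (j : Fin 2) => P i j + P (i + 1) j) p.1.1 0 *
          (Matrix.of fun (i : Fin (m + 3)) (j : Fin 2) => P i j + P (i + 1) j) p.1.2 1 -
         (Matrix.of fun (i : Fin (m + 3)) (j : Fin 2) => P i j + P (i + 1) j) p.1.2 0 *
          (Matrix.of fun (i : Fin (m + 3)) (j : Fin 2) => P i j + P (i + 1) j) p.1.1 1)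
      = (fun a b => (-1:ℝ)^(a+b+1) *
          ((x a + x (a+1)) * (y b + y (b+1)) - (x b + x (b+1)) * (y a + y (a+1))))
          (p.1.1 : ℕ) (p.1.2 : ℕ) := by
    intro p
    simp only [Matrix.of_apply, hx, hy, hcast, hself]
  rw [Finset.sum_congr rfl (fun p _ => e1 p),
    sub_to_range (fun a b => (-1:ℝ)^(a+b+1) *
      ((x a + x (a+1)) * (y b + y (b+1)) - (x b + x (b+1)) * (y a + y (a+1)))),
    closedForm x y (m + 3)]
  have hN0 : ((m + 3 : ℕ) : Fin (m + 3)) = 0 := by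
    exact Fin.natCast_self (m + 3)
  have hx0 : x (m + 3) = x 0 := by simp [hx, hN0]
  have hy0 : y (m + 3) = y 0 := by simp [hy, hN0]
  rw [hx0, hy0]
  have hRHS : ∑ i : Fin (m + 3), (P i 0 * P (i + 1) 1 - P (i + 1) 0 * P i 1)
      = ∑ i ∈ range (m + 3), (x i * y (i+1) - x (i+1) * y i) := by
    rw [← Fin.sum_univ_eq_sum_range (fun a => x a * y (a+1) - x (a+1) * y a) (m + 3)]
    refine Finset.sum_congr rfl fun i _ => ?_
    simp only [hx, hy, hcast, hself]
  rw [hRHS]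
  ring
end
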